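/- Let n and d be natural numbers with d ≥ 1. The ℂ-submodule of all functions v : (Fin n → Fin d) → ℂ satisfying v(x ∘ π) = v(x) for every permutation π of Fin n and every x : Fin n → Fin d (the symmetric subspace of the n-fold tensor power of ℂ^d) is equal to the ℂ-linear span of the set of product functions { x ↦ ∏_{i} θ(x i) : θ : Fin d → ℂ }. -/

import Mathlib

open Finset

/-- The symmetric subspace of the `n`-fold tensor power of `ℂ^d`: functions
`v : (Fin n → Fin d) → ℂ` invariant under permutations of the tensor factors. -/
noncomputable def symSubmodule (n d : ℕ) : Submodule ℂ ((Fin n → Fin d) → ℂ) where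
  carrier := {v | ∀ (π : Equiv.Perm (Fin n)) (x : Fin n → Fin d), v (x ∘ π) = v x}
  add_mem' := by
    intro a b ha hb π x
    simp only [Pi.add_apply, ha π x, hb π x]
  zero_mem' := by
    intro π x
    rfl
  smul_mem' := by
    intro c a ha π x
    simp only [Pi.smul_apply, ha π x]

noncomputable def symv (n d : ℕ) (x : Fin n → Fin d) : (Fin n → Fin d) → ℂ :=
  fun y => ((univ.filter fun π : Equiv.Perm (Fin n) => x ∘ π = y).card : ℂ)

lemma aux_ie {n : ℕ} (g : Fin n → Fin n) :
    ∑ S : Finset (Fin n), (if ∀ i, g i ∈ S then ((-1 : ℂ)) ^ (n - S.card) else 0)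
      = if Function.Bijective g then 1 else 0 := by
  classical
  rw [← Fintype.sum_bijective (fun T : Finset (Fin n) => Tᶜ)
      (compl_involutive.bijective) _ _ (fun T => rfl)]
  have h1 : ∀ T : Finset (Fin n),
      (if ∀ i, g i ∈ Tᶜ then ((-1 : ℂ)) ^ (n - Tᶜ.card) else 0)
        = (if ∀ i, g i ∉ T then ((-1 : ℂ)) ^ T.card else 0) := by
    intro T
    have hc : Tᶜ.card = n - T.card := by simp [Finset.card_compl]
    have hc2 : n - Tᶜ.card = T.card := by
      rw [hc, Nat.sub_sub_self (by simpa using Finset.card_le_univ T)]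
    simp [hc2, Finset.mem_compl]
  simp_rw [h1]
  rw [← Finset.sum_filter]
  have h2 : (univ.filter fun T : Finset (Fin n) => ∀ i, g i ∉ T)
      = ((univ.image g)ᶜ : Finset (Fin n)).powerset := by
    ext T
    simp only [Finset.mem_filter, Finset.mem_univ, true_and, Finset.mem_powerset,
      Finset.subset_iff, Finset.mem_compl, Finset.mem_image]
    constructor
    · rintro h t ht hex
      obtain ⟨i, rfl⟩ := hex
      exact h i ht
    · intro h i hi; exact h hi ⟨i, rfl⟩
  rw [h2]
  have h3 : (∑ T ∈ ((univ.image g)ᶜ : Finset (Fin n)).powerset, ((-1 : ℂ)) ^ T.card)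
      = (((∑ T ∈ ((univ.image g)ᶜ : Finset (Fin n)).powerset, ((-1 : ℤ)) ^ T.card) : ℤ) : ℂ) := by
    push_cast; rfl
  rw [h3, Finset.sum_powerset_neg_one_pow_card]
  have h4 : ((univ.image g)ᶜ = (∅ : Finset (Fin n))) ↔ Function.Bijective g := by
    rw [Finset.compl_eq_empty_iff, ← Finite.surjective_iff_bijective]
    constructor
    · intro h b
      have : b ∈ univ.image g := by rw [h]; exact Finset.mem_univ b
      obtain ⟨a, -, ha⟩ := Finset.mem_image.1 this
      exact ⟨a, ha⟩
    · intro h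
      apply Finset.eq_univ_of_forall
      intro b
      obtain ⟨a, ha⟩ := h b
      exact Finset.mem_image.2 ⟨a, Finset.mem_univ a, ha⟩
  by_cases hb : Function.Bijective g
  · rw [if_pos (h4.2 hb), if_pos hb]; norm_num
  · rw [if_neg (fun h => hb (h4.1 h)), if_neg hb]; norm_num

noncomputable def permEquivBij (n : ℕ) : Equiv.Perm (Fin n) ≃ {g : Fin n → Fin n // Function.Bijective g} where
  toFun π := ⟨⇑π, π.bijective⟩
  invFun g := Equiv.ofBijective g.1 g.2
  left_inv π := by ext i; rfl
  right_inv g := Subtype.ext rfl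

lemma polar {n d : ℕ} (x y : Fin n → Fin d) :
    ∑ S : Finset (Fin n),
        ((-1 : ℂ)) ^ (n - S.card) * ∏ i, (∑ j ∈ S, if x j = y i then (1 : ℂ) else 0)
      = symv n d x y := by
  classical
  set P : (Fin n → Fin n) → ℂ := fun g => ∏ i, (if x (g i) = y i then (1 : ℂ) else 0) with hP
  have key : ∀ S : Finset (Fin n),
      (∏ i, (∑ j ∈ S, if x j = y i then (1 : ℂ) else 0))
        = ∑ g : Fin n → Fin n, (if ∀ i, g i ∈ S then P g else 0) := by
    intro S
    rw [Finset.prod_univ_sum]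
    rw [← Finset.sum_filter]
    apply Finset.sum_congr
    · ext g; simp [Fintype.mem_piFinset]
    · intros; rfl
  simp_rw [key, Finset.mul_sum]
  rw [Finset.sum_comm]
  have step : ∀ g : Fin n → Fin n,
      (∑ S : Finset (Fin n), ((-1 : ℂ)) ^ (n - S.card) * (if ∀ i, g i ∈ S then P g else 0))
        = (if Function.Bijective g then P g else 0) := by
    intro g
    have : ∀ S : Finset (Fin n),
        ((-1 : ℂ)) ^ (n - S.card) * (if ∀ i, g i ∈ S then P g else 0)
          = (if ∀ i, g i ∈ S then ((-1 : ℂ)) ^ (n - S.card) else 0) * P g := by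
      intro S
      by_cases h : ∀ i, g i ∈ S <;> simp [h]
    simp_rw [this]
    rw [← Finset.sum_mul, aux_ie]
    by_cases hb : Function.Bijective g <;> simp [hb]
  simp_rw [step]
  rw [← Finset.sum_filter,
    Finset.sum_subtype (p := fun g : Fin n → Fin n => Function.Bijective g)
      (univ.filter fun g : Fin n → Fin n => Function.Bijective g) (by simp) P,
    ← Fintype.sum_equiv (permEquivBij n) (fun π => P ⇑π) (fun g => P g.1) (fun π => rfl)]
  have hPπ : ∀ π : Equiv.Perm (Fin n), P ⇑π = (if x ∘ ⇑π = y then (1 : ℂ) else 0) := by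
    intro π
    rw [hP]
    simp only [Finset.prod_boole]
    congr 1
    simp [funext_iff, Function.comp]
  simp_rw [hPπ]
  rw [Finset.sum_boole]
  rfl

lemma symv_mem_span (n d : ℕ) (x : Fin n → Fin d) :
    symv n d x ∈ Submodule.span ℂ
      (Set.range fun θ : Fin d → ℂ => fun y : Fin n → Fin d => ∏ i, θ (y i)) := by
  classical
  have hrep : symv n d x = ∑ S : Finset (Fin n),
      ((-1 : ℂ)) ^ (n - S.card) •
        (fun y : Fin n → Fin d =>
          ∏ i, (fun m => ∑ j ∈ S, if x j = m then (1 : ℂ) else 0) (y i)) := by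
    funext y
    simp only [Finset.sum_apply, Pi.smul_apply, smul_eq_mul]
    exact (polar x y).symm
  rw [hrep]
  exact Submodule.sum_mem _ fun S _ =>
    Submodule.smul_mem _ _ (Submodule.subset_span ⟨fun m => ∑ j ∈ S, if x j = m then (1 : ℂ) else 0, by funext y; rfl⟩)

/-- The symmetric subspace of `(ℂ^d)^{⊗n}` is spanned by the product vectors
`θ^{⊗n} : x ↦ ∏ᵢ θ(xᵢ)`. -/
theorem symSubmodule_eq_span_prod (n d : ℕ) (hd : 1 ≤ d) :
    symSubmodule n d =
      Submodule.span ℂ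
        (Set.range fun θ : Fin d → ℂ => fun x : Fin n → Fin d => ∏ i, θ (x i)) := by
  classical
  apply le_antisymm
  · intro v hv
    have hv' : ∀ (π : Equiv.Perm (Fin n)) (y : Fin n → Fin d), v (y ∘ π) = v y := hv
    have key : v = (n.factorial : ℂ)⁻¹ • ∑ x : Fin n → Fin d, v x • symv n d x := by
      funext y
      have hiff : ∀ (x : Fin n → Fin d) (π : Equiv.Perm (Fin n)),
          (x ∘ ⇑π = y) ↔ (x = y ∘ ⇑π⁻¹) := by
        intro x π
        constructor
        · rintro rfl; funext a; simp [Function.comp]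
        · rintro rfl; funext a; simp [Function.comp]
      have h1 : ∀ x : Fin n → Fin d,
          symv n d x y = ∑ π : Equiv.Perm (Fin n), (if x = y ∘ ⇑π⁻¹ then (1 : ℂ) else 0) := by
        intro x
        unfold symv
        rw [Finset.sum_boole]
        congr 1
        norm_cast
        congr 1
        apply Finset.filter_congr
        intro π _
        exact hiff x π
      have h2 : (∑ x : Fin n → Fin d, v x • symv n d x) y = (n.factorial : ℂ) * v y := by
        simp only [Finset.sum_apply, Pi.smul_apply, smul_eq_mul]
        simp_rw [h1, Finset.mul_sum]
        rw [Finset.sum_comm]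
        have h3 : ∀ π : Equiv.Perm (Fin n),
            (∑ x : Fin n → Fin d, v x * (if x = y ∘ ⇑π⁻¹ then (1 : ℂ) else 0)) = v y := by
          intro π
          simp only [mul_ite, mul_one, mul_zero]
          rw [Finset.sum_ite_eq' Finset.univ (y ∘ ⇑π⁻¹) v]
          simpa using hv' π⁻¹ y
        simp_rw [h3]
        simp [Finset.card_univ, Fintype.card_perm, Fintype.card_fin, mul_comm]
      simp only [Pi.smul_apply, smul_eq_mul, h2]
      rw [← mul_assoc, inv_mul_cancel₀ (by exact_mod_cast n.factorial_ne_zero), one_mul]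
    rw [key]
    exact Submodule.smul_mem _ _ (Submodule.sum_mem _ fun x _ =>
      Submodule.smul_mem _ _ (symv_mem_span n d x))
  · rw [Submodule.span_le]
    rintro f ⟨θ, rfl⟩
    intro π x
    simp only [Function.comp]
    exact Equiv.prod_comp π fun i => θ (x i)
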